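/- The set 𝒯' of infinite topologically transitive subshifts is a dense Gδ subset of its closure 𝒯'‾ in the space 𝐒 of all subshifts. -/

import Mathlib

open Set Topology Filter

namespace Generic

/-- The shift map `σ` on `ℤ → ℤ`, `(σ x) i = x (i+1)`. -/
def shift : (ℤ → ℤ) → (ℤ → ℤ) := fun x i => x (i + 1)

/-- A subshift: a nonempty compact shift-invariant subset of `𝒜^ℤ`
for some finite alphabet `𝒜 ⊂ ℤ` (product topology, `ℤ` discrete). -/
structure Subshift where
  carrier : Set (ℤ → ℤ)
  nonempty' : carrier.Nonempty
  finite_alphabet : ∃ A : Finset ℤ, ∀ x ∈ carrier, ∀ i : ℤ, x i ∈ A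
  shift_invariant : shift '' carrier = carrier
  isCompact' : IsCompact carrier

/-- The finite word `w` occurs in the biinfinite sequence `x`. -/
def Occurs (w : List ℤ) (x : ℤ → ℤ) : Prop :=
  ∃ k : ℤ, ∀ i : Fin w.length, x (k + (i.1 : ℤ)) = w.get i

namespace Subshift

/-- `L_n(X)`: the set of `n`-letter words appearing in points of `X`. -/
def lang (X : Subshift) (n : ℕ) : Set (List ℤ) :=
  {w | w.length = n ∧ ∃ x ∈ X.carrier, ∀ i : Fin w.length, x (i.1 : ℤ) = w.get i}

/-- The word complexity function `c_X(n) = |L_n(X)|`. -/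
noncomputable def complexity (X : Subshift) (n : ℕ) : ℕ := (X.lang n).ncard

/-- `X` is a shift of finite type: for some finite alphabet `A` and finite set `F` of
forbidden words, `X` is the set of all points of `A^ℤ` containing no word of `F`. -/
def IsSFT (X : Subshift) : Prop :=
  ∃ (A : Finset ℤ) (F : Finset (List ℤ)),
    X.carrier = {x | (∀ i : ℤ, x i ∈ A) ∧ ∀ w ∈ F, ¬ Occurs w x}

end Subshift

/-- The cylinder set `[X, n] = {Y : L_n(Y) = L_n(X)}`. -/
def cylinder (X : Subshift) (n : ℕ) : Set Subshift := {Y | Y.lang n = X.lang n}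

/-- The topology of the space `𝐒` of all subshifts: generated by the cylinder sets `[X,n]`;
this is the topology of the metric `d(X,Y) = 2^{-inf{n : L_n(X) ≠ L_n(Y)}}`. -/
instance : TopologicalSpace Subshift :=
  TopologicalSpace.generateFrom {C | ∃ (X : Subshift) (n : ℕ), C = cylinder X n}

/-- A directed (multi)graph: edge set `E`, vertex set `V`, source and target maps. -/
structure Digraph (V : Type*) (E : Type*) where
  src : E → V
  tgt : E → V

namespace Digraph

variable {V E : Type*}

/-- A cycle of length `k`, encoded as a map `ZMod k → E` with matching endpoints. -/
def IsCycle (G : Digraph V E) {k : ℕ} (c : ZMod k → E) : Prop :=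
  0 < k ∧ ∀ i, G.tgt (c i) = G.src (c (i + 1))

/-- The vertex set of a cycle. -/
def cycleVerts (G : Digraph V E) {k : ℕ} (c : ZMod k → E) : Set V :=
  Set.range fun i => G.src (c i)

/-- The cycle `c` has an incoming edge: an edge whose terminal vertex is on the cycle
and whose initial vertex is not. -/
def HasIncoming (G : Digraph V E) {k : ℕ} (c : ZMod k → E) : Prop :=
  ∃ f : E, G.tgt f ∈ G.cycleVerts c ∧ G.src f ∉ G.cycleVerts c

/-- The cycle `c` has an outgoing edge: an edge whose initial vertex is on the cycle
and whose terminal vertex is not. -/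
def HasOutgoing (G : Digraph V E) {k : ℕ} (c : ZMod k → E) : Prop :=
  ∃ g : E, G.src g ∈ G.cycleVerts c ∧ G.tgt g ∉ G.cycleVerts c

/-- No middle cycles property: no cycle has both an incoming and an outgoing edge. -/
def NMC (G : Digraph V E) : Prop :=
  ¬ ∃ (k : ℕ) (c : ZMod k → E), G.IsCycle c ∧ G.HasIncoming c ∧ G.HasOutgoing c

/-- A simple cycle: a cycle visiting no vertex twice. -/
def IsSimpleCycle (G : Digraph V E) {k : ℕ} (c : ZMod k → E) : Prop :=
  G.IsCycle c ∧ Function.Injective fun i => G.src (c i)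

/-- One middle cycle property: there is a unique simple cycle having both an incoming
and an outgoing edge. -/
def OMC (G : Digraph V E) : Prop :=
  ∃ (k : ℕ) (c : ZMod k → E), G.IsSimpleCycle c ∧ G.HasIncoming c ∧ G.HasOutgoing c ∧
    ∀ (k' : ℕ) (c' : ZMod k' → E), G.IsSimpleCycle c' → G.HasIncoming c' → G.HasOutgoing c' →
      Set.range c' = Set.range c

end Digraph

/-- The `n`-th Rauzy graph of `X`: vertices are the `(n-1)`-letter words of `L(X)`
(embedded in `List ℤ`), edges are the `n`-letter words `w ∈ L_n(X)`, with
`src w` the length-`(n-1)` prefix and `tgt w` the length-`(n-1)` suffix. -/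
def rauzyGraph (X : Subshift) (n : ℕ) : Digraph (List ℤ) (X.lang n) :=
  ⟨fun w => w.1.dropLast, fun w => w.1.tail⟩

/-- `X` has the no middle cycles property. -/
def Subshift.IsNMC (X : Subshift) : Prop := ∃ n : ℕ, 1 ≤ n ∧ (rauzyGraph X n).NMC

/-- `X` has the one middle cycle property. -/
def Subshift.IsOMC (X : Subshift) : Prop := ∃ n : ℕ, 1 ≤ n ∧ (rauzyGraph X n).OMC

/-- The set of NMC subshifts. -/
def NMCset : Set Subshift := {X | X.IsNMC}

/-- The set of OMC subshifts. -/
def OMCset : Set Subshift := {X | X.IsOMC}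

/-- `𝐒'`: the complement of the set of NMC subshifts. -/
def Sprime : Set Subshift := NMCsetᶜ

/-- The shift of a point by `k`: `(σ^k x) i = x (i + k)`. -/
def shiftBy (k : ℤ) (x : ℤ → ℤ) : ℤ → ℤ := fun i => x (i + k)

/-- The orbit `{σ^k x : k ∈ ℤ}` of a point. -/
def orbitOf (x : ℤ → ℤ) : Set (ℤ → ℤ) := {y | ∃ k : ℤ, y = shiftBy k x}

/-- `X` is (topologically) transitive: some point has dense orbit. -/
def Subshift.IsTransitive (X : Subshift) : Prop :=
  ∃ x ∈ X.carrier, X.carrier ⊆ closure (orbitOf x)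

/-- `X` is totally transitive: for every `k ≥ 1` some point has dense `σ^k`-orbit. -/
def Subshift.IsTotallyTransitive (X : Subshift) : Prop :=
  ∀ k : ℕ, 1 ≤ k → ∃ x ∈ X.carrier,
    X.carrier ⊆ closure {y | ∃ m : ℤ, y = shiftBy (m * k) x}

/-- `𝒯'`: the set of infinite transitive subshifts. -/
def Tprime : Set Subshift := {X | X.IsTransitive ∧ X.carrier.Infinite}

/-- `𝒯𝒯'`: the set of infinite totally transitive subshifts. -/
def TTprime : Set Subshift := {X | X.IsTotallyTransitive ∧ X.carrier.Infinite}

/-- `X` is minimal: every word of the language occurs in every point. -/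
def Subshift.IsMinimal (X : Subshift) : Prop :=
  ∀ n : ℕ, ∀ w ∈ X.lang n, ∀ x ∈ X.carrier, Occurs w x

/-- `X` has a periodic point. -/
def Subshift.HasPeriodicPoint (X : Subshift) : Prop :=
  ∃ x ∈ X.carrier, ∃ k : ℕ, 1 ≤ k ∧ ∀ i : ℤ, x (i + k) = x i

/-- `X` is topologically mixing. -/
def Subshift.IsMixing (X : Subshift) : Prop :=
  ∀ (nv nw : ℕ), ∀ v ∈ X.lang nv, ∀ w ∈ X.lang nw, ∃ N : ℕ, ∀ n : ℕ, N < n →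
    ∃ x ∈ X.carrier, (∀ i : Fin v.length, x (i.1 : ℤ) = v.get i) ∧
      ∀ i : Fin w.length, x ((n : ℤ) + (i.1 : ℤ)) = w.get i

lemma Subshift.shift_mem (X : Subshift) {x : ℤ → ℤ} (hx : x ∈ X.carrier) :
    shift x ∈ X.carrier :=
  X.shift_invariant ▸ Set.mem_image_of_mem shift hx

/-- The restriction of the shift map to `X`. -/
def Subshift.restrictShift (X : Subshift) : ↥X.carrier → ↥X.carrier :=
  fun x => ⟨shift x.1, X.shift_mem x.2⟩

/-- Topological conjugacy of subshifts. -/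
def Conjugate (X Y : Subshift) : Prop :=
  ∃ φ : ↥X.carrier ≃ₜ ↥Y.carrier, ∀ x, φ (X.restrictShift x) = Y.restrictShift (φ x)

/-- `lam` is a topological eigenvalue of `(X, σ)`. -/
def Subshift.IsTopEigenvalue (X : Subshift) (lam : ℂ) : Prop :=
  ∃ f : ↥X.carrier → ℂ, Continuous f ∧ (∃ x, f x ≠ 0) ∧
    ∀ x, f (X.restrictShift x) = lam * f x

/-- A regular Toeplitz sequence. -/
def IsRegularToeplitz (x : ℤ → ℤ) : Prop :=
  ∀ ε : ℝ, 0 < ε → ∃ n : ℕ, 0 < n ∧ ∃ S : Finset ℕ, S ⊆ Finset.range n ∧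
    (1 - ε) * (n : ℝ) < (S.card : ℝ) ∧
    ∀ s ∈ S, ∀ i j : ℤ, x ((s : ℤ) + i * (n : ℤ)) = x ((s : ℤ) + j * (n : ℤ))

/-- A regular Toeplitz subshift: the orbit closure of a regular Toeplitz sequence. -/
def Subshift.IsRegularToeplitzSubshift (X : Subshift) : Prop :=
  ∃ x : ℤ → ℤ, IsRegularToeplitz x ∧ X.carrier = closure (orbitOf x)

/-- `X` is the disjoint union of `σ^i E`, `0 ≤ i < n`, for some clopen `E`. -/
def Subshift.HasCyclicPartition (X : Subshift) (n : ℕ) : Prop :=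
  ∃ E : Set ↥X.carrier, IsClopen E ∧
    (⋃ i ∈ Finset.range n, X.restrictShift^[i] '' E) = Set.univ ∧
    ∀ i j : ℕ, i < n → j < n → i ≠ j →
      Disjoint (X.restrictShift^[i] '' E) (X.restrictShift^[j] '' E)

/-- The biinfinite periodic point `p^∞` (with `p` occupying positions `[0, |p|)` and
repeating in both directions). -/
def perPoint (p : List ℤ) : ℤ → ℤ :=
  fun i => p.getD (Int.emod i (p.length : ℤ)).toNat 0

/-- The point `p^∞ m s^∞`: a left-infinite repetition of `p` (ending at position `-1`),
then `m` on `[0, |m|)`, then a right-infinite repetition of `s`. -/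
def barbellPoint (p m s : List ℤ) : ℤ → ℤ := fun i =>
  if i < 0 then perPoint p i
  else if i < (m.length : ℤ) then m.getD i.toNat 0
  else perPoint s (i - (m.length : ℤ))

/-- `𝐒(Y)`: the subshifts contained in `Y`. -/
def SubshiftsOf (Y : Subshift) : Set Subshift := {X | X.carrier ⊆ Y.carrier}

/-- `τ(y)`: the biinfinite concatenation `⋯ t(y₋₁).t(y₀) t(y₁) ⋯` of blocks of length `ℓ`. -/
def tauPoint (t : ℤ → List ℤ) (ℓ : ℕ) (y : ℤ → ℤ) : ℤ → ℤ :=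
  fun j => (t (y (Int.ediv j (ℓ : ℤ)))).getD (Int.emod j (ℓ : ℤ)).toNat 0

/-- `τ*(Y) = {σ^i τ(y) : y ∈ Y, 0 ≤ i < ℓ}`. -/
def tauStar (t : ℤ → List ℤ) (ℓ : ℕ) (Y : Subshift) : Set (ℤ → ℤ) :=
  {z | ∃ y ∈ Y.carrier, ∃ i : ℕ, i < ℓ ∧ z = fun j => tauPoint t ℓ y (j + (i : ℤ))}

/-- `τ(v)` for a finite word `v`: the concatenation of the blocks. -/
def tauWord (t : ℤ → List ℤ) (v : List ℤ) : List ℤ := (v.map t).flatten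

/-- The set of `σ`-orbits of `X`. -/
def Subshift.orbitSet (X : Subshift) : Set (Set (ℤ → ℤ)) :=
  {O | ∃ x ∈ X.carrier, O = orbitOf x}


/-! ### Auxiliary machinery for the genericity theorem -/

section Aux

open Classical in
/-- The window of `x` of length `n` starting at position `k`. -/
def window (x : ℤ → ℤ) (k : ℤ) (n : ℕ) : List ℤ := List.ofFn fun i : Fin n => x (k + (i : ℕ))

@[simp] lemma window_length (x : ℤ → ℤ) (k : ℤ) (n : ℕ) : (window x k n).length = n :=
  List.length_ofFn

lemma window_getElem (x : ℤ → ℤ) (k : ℤ) (n : ℕ) (i : ℕ) (h : i < (window x k n).length) :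
    (window x k n)[i] = x (k + (i : ℕ)) := by
  simp [window, List.getElem_ofFn]

lemma shiftBy_shiftBy (a b : ℤ) (x : ℤ → ℤ) : shiftBy a (shiftBy b x) = shiftBy (a + b) x := by
  funext i; simp [shiftBy, add_assoc]

lemma shift_eq_shiftBy (x : ℤ → ℤ) : shift x = shiftBy 1 x := rfl

lemma shiftBy_zero (x : ℤ → ℤ) : shiftBy 0 x = x := by funext i; simp [shiftBy]

lemma Subshift.shiftBy_mem (X : Subshift) (k : ℤ) {x : ℤ → ℤ} (hx : x ∈ X.carrier) :
    shiftBy k x ∈ X.carrier := by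
  induction k using Int.induction_on with
  | zero => rw [shiftBy_zero]; exact hx
  | succ n ih =>
      have h1 := X.shift_mem ih
      rw [shift_eq_shiftBy, shiftBy_shiftBy] at h1
      convert h1 using 2; ring
  | pred n ih =>
      rw [← X.shift_invariant] at ih
      obtain ⟨y, hy, hsy⟩ := ih
      have h1 : y = shiftBy (-(n : ℤ) - 1) x := by
        funext i
        have h2 := congrFun hsy (i - 1)
        simp only [shift, shiftBy] at h2 ⊢
        rw [show i - 1 + 1 = i by ring] at h2
        rw [h2]; congr 1; ring
      rw [← h1]; exact hy

lemma Subshift.mem_lang_iff {X : Subshift} {w : List ℤ} {n : ℕ} :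
    w ∈ X.lang n ↔ w.length = n ∧
      ∃ x ∈ X.carrier, ∀ i : ℕ, ∀ _ : i < w.length, x (i : ℕ) = w[i] := by
  constructor
  · rintro ⟨hl, x, hx, hw⟩
    exact ⟨hl, x, hx, fun i h => by simpa [List.get_eq_getElem] using hw ⟨i, h⟩⟩
  · rintro ⟨hl, x, hx, hw⟩
    exact ⟨hl, x, hx, fun i => by simpa [List.get_eq_getElem] using hw i i.2⟩

lemma Subshift.window_mem_lang (X : Subshift) {x : ℤ → ℤ} (hx : x ∈ X.carrier) (k : ℤ) (n : ℕ) :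
    window x k n ∈ X.lang n := by
  rw [Subshift.mem_lang_iff]
  refine ⟨window_length x k n, shiftBy k x, X.shiftBy_mem k hx, fun i h => ?_⟩
  rw [window_getElem]
  simp [shiftBy, add_comm]

lemma Subshift.lang_finite (X : Subshift) (n : ℕ) : (X.lang n).Finite := by
  obtain ⟨A, hA⟩ := X.finite_alphabet
  have hsub : X.lang n ⊆
      (fun f : Fin n → ℤ => List.ofFn f) '' (Set.univ.pi fun _ : Fin n => (A : Set ℤ)) := by
    intro w hw
    rw [Subshift.mem_lang_iff] at hw
    obtain ⟨hl, x, hx, hvals⟩ := hw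
    subst hl
    refine ⟨fun i => w[(i : ℕ)], fun i _ => ?_, List.ofFn_getElem⟩
    show w[(i : ℕ)] ∈ (A : Set ℤ)
    rw [← hvals i i.2]
    exact hA x hx _
  exact ((Set.Finite.pi fun _ => A.finite_toSet).image _).subset hsub

lemma Subshift.lang_take (X : Subshift) {n N : ℕ} (h : n ≤ N) :
    X.lang n = (fun w : List ℤ => w.take n) '' X.lang N := by
  ext w
  constructor
  · intro hw
    rw [Subshift.mem_lang_iff] at hw
    obtain ⟨hl, x, hx, hvals⟩ := hw
    refine ⟨window x 0 N, X.window_mem_lang hx 0 N, ?_⟩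
    apply List.ext_getElem
    · simp [hl]; omega
    · intro i h1 h2
      rw [List.getElem_take, window_getElem]
      rw [← hvals i h2]
      congr 1; ring
  · rintro ⟨W, hW, rfl⟩
    rw [Subshift.mem_lang_iff] at hW ⊢
    obtain ⟨hl, x, hx, hvals⟩ := hW
    refine ⟨by simp [hl]; omega, x, hx, fun i hi => ?_⟩
    rw [List.getElem_take]
    exact hvals i (by simp at hi; omega)

lemma Subshift.exists_lang_prefix (X : Subshift) {u : List ℤ} {n N : ℕ} (hu : u ∈ X.lang n)
    (h : n ≤ N) : ∃ u' ∈ X.lang N, u <+: u' := by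
  rw [X.lang_take h] at hu
  obtain ⟨W, hW, rfl⟩ := hu
  exact ⟨W, hW, List.take_prefix _ _⟩

/-- `u` occurs in `x` at position `k`. -/
def OccAt (x : ℤ → ℤ) (k : ℤ) (u : List ℤ) : Prop :=
  ∀ i : ℕ, ∀ _ : i < u.length, x (k + (i : ℕ)) = u[i]

lemma occAt_of_infix {x : ℤ → ℤ} {q : ℤ} {u v : List ℤ} (h : u <:+: v) (hv : OccAt x q v) :
    ∃ k : ℤ, OccAt x k u := by
  obtain ⟨s, t, rfl⟩ := h
  refine ⟨q + (s.length : ℕ), fun i hi => ?_⟩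
  have h2 : s.length + i < (s ++ u ++ t).length := by simp; omega
  have h3 := hv (s.length + i) h2
  have h4 : (s ++ u ++ t)[s.length + i]'h2 = u[i] := by
    rw [List.getElem_append_left (by simp; omega),
      List.getElem_append_right (by omega)]
    congr 1; omega
  rw [h4] at h3
  rw [← h3]
  congr 1
  push_cast
  ring

lemma infix_window_of_occAt {x : ℤ → ℤ} {k a : ℤ} {u : List ℤ} {L : ℕ}
    (hocc : OccAt x k u) (h1 : a ≤ k) (h2 : k + u.length ≤ a + L) :
    u <:+: window x a L := by
  have hd0 : (((k - a).toNat : ℤ)) = k - a := Int.toNat_of_nonneg (by omega)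
  have hd : u = ((window x a L).drop (k - a).toNat).take u.length := by
    apply List.ext_getElem
    · simp; omega
    · intro i hi1 hi2
      rw [List.getElem_take, List.getElem_drop, window_getElem]
      rw [← hocc i hi1]
      congr 1
      push_cast
      omega
  rw [hd]
  exact (List.take_prefix _ _).isInfix.trans (List.drop_suffix _ _).isInfix

open Classical in
private noncomputable def sepIdx (a b : ℤ → ℤ) : ℤ :=
  if h : ∃ i : ℤ, a i ≠ b i then h.choose else 0

open Classical in
private lemma sepIdx_spec {a b : ℤ → ℤ} (h : a ≠ b) : a (sepIdx a b) ≠ b (sepIdx a b) := by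
  have h' : ∃ i : ℤ, a i ≠ b i := by
    by_contra hc; push_neg at hc; exact h (funext hc)
  rw [sepIdx, dif_pos h']
  exact h'.choose_spec

open Classical in
private noncomputable def langWitness (X : Subshift) (w : List ℤ) : ℤ → ℤ :=
  if h : ∃ x ∈ X.carrier, ∀ i : ℕ, ∀ _ : i < w.length, x (i : ℕ) = w[i] then h.choose else 0

open Classical in
private lemma langWitness_spec {X : Subshift} {w : List ℤ} {n : ℕ} (hw : w ∈ X.lang n) :
    langWitness X w ∈ X.carrier ∧
      ∀ i : ℕ, ∀ _ : i < w.length, (langWitness X w) (i : ℕ) = w[i] := by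
  have h := (Subshift.mem_lang_iff.1 hw).2
  rw [langWitness, dif_pos h]
  obtain ⟨hx, hvals⟩ := h.choose_spec
  exact ⟨hx, hvals⟩

/-- Infiniteness is equivalent to unbounded complexity. -/
lemma Subshift.infinite_iff (X : Subshift) :
    X.carrier.Infinite ↔ ∀ B : ℕ, ∃ m : ℕ, B < (X.lang m).ncard := by
  constructor
  · intro hinf B
    obtain ⟨T, hTsub, hTcard⟩ := hinf.exists_subset_card_eq (B + 1)
    classical
    set n : ℕ := T.sup (fun a => T.sup (fun b => (sepIdx a b).natAbs)) with hn
    have hinj : Set.InjOn (fun z : ℤ → ℤ => window z (-(n : ℤ)) (2 * n + 1)) ↑T := by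
      intro a ha b hb hab'
      replace hab' : window a (-(n : ℤ)) (2 * n + 1) = window b (-(n : ℤ)) (2 * n + 1) := hab'
      by_contra hne
      have hd := sepIdx_spec hne
      have hbound : (sepIdx a b).natAbs ≤ n :=
        le_trans (Finset.le_sup (f := fun b => (sepIdx a b).natAbs) hb)
          (Finset.le_sup (f := fun a => T.sup fun b => (sepIdx a b).natAbs) ha)
      set i0 : ℕ := (sepIdx a b + n).toNat with hi0
      have hi0' : ((i0 : ℕ) : ℤ) = sepIdx a b + n := by
        rw [hi0]; exact Int.toNat_of_nonneg (by omega)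
      have hlt : i0 < (window a (-(n : ℤ)) (2 * n + 1)).length := by simp; omega
      have e1 := window_getElem a (-(n : ℤ)) (2 * n + 1) i0 hlt
      have e2 := window_getElem b (-(n : ℤ)) (2 * n + 1) i0 (by simp; omega)
      have e3 : a (-(n : ℤ) + (i0 : ℕ)) = b (-(n : ℤ) + (i0 : ℕ)) := by
        rw [← e1, ← e2]
        exact List.getElem_of_eq hab' hlt
      rw [hi0', show -(n : ℤ) + (sepIdx a b + n) = sepIdx a b by ring] at e3
      exact hd e3
    refine ⟨2 * n + 1, ?_⟩
    have hmaps : ∀ a ∈ (↑T : Set (ℤ → ℤ)), window a (-(n : ℤ)) (2 * n + 1) ∈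
        X.lang (2 * n + 1) := fun a ha => X.window_mem_lang (hTsub ha) _ _
    have hle : (↑T : Set (ℤ → ℤ)).ncard ≤ (X.lang (2 * n + 1)).ncard :=
      Set.ncard_le_ncard_of_injOn _ hmaps hinj (X.lang_finite _)
    rw [Set.ncard_coe_finset, hTcard] at hle
    omega
  · intro h
    by_contra hfin
    rw [Set.not_infinite] at hfin
    obtain ⟨m, hm⟩ := h X.carrier.ncard
    have hmaps : ∀ w ∈ X.lang m, langWitness X w ∈ X.carrier :=
      fun w hw => (langWitness_spec hw).1
    have hinj : Set.InjOn (langWitness X) (X.lang m) := by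
      intro w hw w' hw' heq
      have h1 := (langWitness_spec hw).2
      have h2 := (langWitness_spec hw').2
      have hl1 : w.length = m := (Subshift.mem_lang_iff.1 hw).1
      have hl2 : w'.length = m := (Subshift.mem_lang_iff.1 hw').1
      apply List.ext_getElem (by omega)
      intro i hi1 hi2
      rw [← h1 i hi1, ← h2 i hi2, heq]
    have := Set.ncard_le_ncard_of_injOn _ hmaps hinj hfin
    omega

/-- Transitivity is equivalent to: for every `n` there is a word of the language
containing every word of `L_n(X)` as an infix. -/
lemma Subshift.isTransitive_iff (X : Subshift) :
    X.IsTransitive ↔ ∀ n : ℕ, ∃ m : ℕ, ∃ v ∈ X.lang m, ∀ u ∈ X.lang n, u <:+: v := by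
  constructor
  · rintro ⟨x, hx, hdense⟩ n
    classical
    have hocc : ∀ u ∈ X.lang n, ∃ k : ℤ, OccAt x k u := by
      intro u hu
      rw [Subshift.mem_lang_iff] at hu
      obtain ⟨hl, y, hy, hvals⟩ := hu
      have hyc := hdense hy
      rw [mem_closure_iff] at hyc
      have hU : IsOpen {z : ℤ → ℤ | ∀ i : Fin u.length, z ((i : ℕ) : ℤ) = u[(i : ℕ)]} := by
        have he : {z : ℤ → ℤ | ∀ i : Fin u.length, z ((i : ℕ) : ℤ) = u[(i : ℕ)]} =
            ⋂ i : Fin u.length, (fun z : ℤ → ℤ => z ((i : ℕ) : ℤ)) ⁻¹' {u[(i : ℕ)]} := by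
          ext z; simp [Set.mem_iInter]
        rw [he]
        exact isOpen_iInter_of_finite fun i =>
          (continuous_apply (((i : ℕ) : ℤ))).isOpen_preimage _ (isOpen_discrete _)
      obtain ⟨z, hz1, hz2⟩ := hyc _ hU (fun i => hvals (i : ℕ) i.2)
      obtain ⟨k, rfl⟩ := hz2
      refine ⟨k, fun i hi => ?_⟩
      have := hz1 ⟨i, hi⟩
      simp only [shiftBy] at this
      rw [← this]
      congr 1; ring
    let g : List ℤ → ℤ := fun u => if h : ∃ k : ℤ, OccAt x k u then h.choose else 0
    have hg : ∀ u ∈ X.lang n, OccAt x (g u) u := by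
      intro u hu
      have h := hocc u hu
      show OccAt x (dite _ _ _) u
      rw [dif_pos h]
      exact h.choose_spec
    have hfin := X.lang_finite n
    set M : ℕ := hfin.toFinset.sup (fun u => (g u).natAbs) with hM
    refine ⟨2 * M + n, window x (-(M : ℤ)) (2 * M + n), X.window_mem_lang hx _ _, ?_⟩
    intro u hu
    have hgu := hg u hu
    have hb : (g u).natAbs ≤ M := by
      rw [hM]
      exact Finset.le_sup (f := fun u => (g u).natAbs) (hfin.mem_toFinset.2 hu)
    have hlu : u.length = n := (Subshift.mem_lang_iff.1 hu).1
    exact infix_window_of_occAt hgu (by omega) (by push_cast; omega)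
  · intro P
    classical
    have hV : ∀ n : ℕ, ∃ v : List ℤ, v ∈ X.lang v.length ∧ ∀ u ∈ X.lang n, u <:+: v := by
      intro n
      obtain ⟨m, v, hv, hcov⟩ := P n
      have hl : v.length = m := (Subshift.mem_lang_iff.1 hv).1
      exact ⟨v, by rw [hl]; exact hv, hcov⟩
    choose V hV1 hV2 using hV
    have hcov_le : ∀ {ℓ Mm : ℕ}, ℓ ≤ Mm → ∀ u ∈ X.lang ℓ, u <:+: V Mm := by
      intro ℓ Mm h u hu
      obtain ⟨u', hu', hpre⟩ := X.exists_lang_prefix hu h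
      exact hpre.isInfix.trans (hV2 Mm u' hu')
    let w : ℕ → List ℤ := fun k => Nat.rec (V 0) (fun k wk => V (max (k + 1) wk.length)) k
    have hw_succ : ∀ k, w (k + 1) = V (max (k + 1) (w k).length) := fun k => rfl
    have hw_mem : ∀ k, w k ∈ X.lang (w k).length := by
      intro k
      cases k with
      | zero => exact hV1 0
      | succ k => rw [hw_succ]; exact hV1 _
    have hw_cov : ∀ k, ∀ u ∈ X.lang k, u <:+: w k := by
      intro k
      cases k with
      | zero => exact hV2 0
      | succ k =>
          rw [hw_succ]
          exact fun u hu => hcov_le (le_max_left _ _) u hu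
    have hw_step : ∀ k, ∃ s t : List ℤ, s ++ w k ++ t = w (k + 1) := by
      intro k
      rw [hw_succ]
      exact hcov_le (le_max_right _ _) (w k) (hw_mem k)
    choose sl tl hst using hw_step
    let p : ℕ → ℤ := fun k => Nat.rec 0 (fun k pk => pk - ((sl k).length : ℕ)) k
    have hp_succ : ∀ k, p (k + 1) = p k - ((sl k).length : ℕ) := fun k => rfl
    let C : ℕ → Set (ℤ → ℤ) := fun k => {z ∈ X.carrier | OccAt z (p k) (w k)}
    have hCsub : ∀ k, C (k + 1) ⊆ C k := by
      rintro k z ⟨hzc, hz⟩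
      refine ⟨hzc, fun i hi => ?_⟩
      have hlen : (sl k).length + i < (w (k + 1)).length := by
        rw [← hst k]; simp; omega
      have h2 := hz ((sl k).length + i) hlen
      have key : (w (k + 1))[(sl k).length + i]'hlen = (w k)[i]'hi := by
        rw [List.getElem_of_eq (hst k).symm hlen]
        rw [List.getElem_append_left (by simp; omega),
          List.getElem_append_right (by omega)]
        congr 1; omega
      rw [key] at h2
      rw [← h2]
      congr 1
      rw [hp_succ]
      push_cast
      ring
    have hCne : ∀ k, (C k).Nonempty := by
      intro k
      obtain ⟨x0, hx0, hvals⟩ := (Subshift.mem_lang_iff.1 (hw_mem k)).2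
      refine ⟨shiftBy (-(p k)) x0, X.shiftBy_mem _ hx0, fun i hi => ?_⟩
      show x0 (p k + (i : ℕ) + -(p k)) = _
      rw [show p k + (i : ℕ) + -(p k) = ((i : ℕ) : ℤ) by ring]
      exact hvals i hi
    have hCclosed : ∀ k, IsClosed (C k) := by
      intro k
      have h1 : IsClosed X.carrier := X.isCompact'.isClosed
      have h2 : IsClosed {z : ℤ → ℤ | OccAt z (p k) (w k)} := by
        have he : {z : ℤ → ℤ | OccAt z (p k) (w k)} =
            ⋂ i : Fin (w k).length,
              (fun z : ℤ → ℤ => z (p k + ((i : ℕ) : ℤ))) ⁻¹' {(w k)[(i : ℕ)]} := by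
          ext z
          simp only [Set.mem_iInter, Set.mem_setOf_eq, Set.mem_preimage, Set.mem_singleton_iff]
          exact ⟨fun h i => h (i : ℕ) i.2, fun h i hi => h ⟨i, hi⟩⟩
        rw [he]
        exact isClosed_iInter fun i =>
          IsClosed.preimage (continuous_apply _) (isClosed_discrete _)
      exact h1.inter h2
    have hCcpt : IsCompact (C 0) :=
      X.isCompact'.of_isClosed_subset (hCclosed 0) (fun z hz => hz.1)
    obtain ⟨x, hxall⟩ :=
      IsCompact.nonempty_iInter_of_sequence_nonempty_isCompact_isClosed C hCsub hCne hCcpt hCclosed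
    simp only [Set.mem_iInter] at hxall
    have hxc : x ∈ X.carrier := (hxall 0).1
    refine ⟨x, hxc, ?_⟩
    intro y hy
    have hwin : ∀ n : ℕ, ∃ q : ℤ, OccAt x q (window y (-(n : ℤ)) (2 * n + 1)) := by
      intro n
      have h1 : window y (-(n : ℤ)) (2 * n + 1) ∈ X.lang (2 * n + 1) :=
        X.window_mem_lang hy _ _
      exact occAt_of_infix (hw_cov (2 * n + 1) _ h1) (hxall (2 * n + 1)).2
    choose q hq using hwin
    have htend : Filter.Tendsto (fun n : ℕ => shiftBy (q n + n) x) Filter.atTop (nhds y) := by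
      rw [tendsto_pi_nhds]
      intro j
      refine Filter.Tendsto.congr' ?_ tendsto_const_nhds
      filter_upwards [Filter.eventually_ge_atTop j.natAbs] with n hn
      have hi : (j + (n : ℤ)).toNat < (window y (-(n : ℤ)) (2 * n + 1)).length := by
        simp; omega
      have h3 := hq n ((j + (n : ℤ)).toNat) hi
      rw [window_getElem] at h3
      have e1 : (((j + (n : ℤ)).toNat : ℕ) : ℤ) = j + n := Int.toNat_of_nonneg (by omega)
      rw [e1] at h3
      show y j = x (j + (q n + (n : ℤ)))
      rw [show j + (q n + (n : ℤ)) = q n + (j + n) by ring, h3]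
      congr 1; ring
    exact mem_closure_of_tendsto htend (Filter.Eventually.of_forall fun n => ⟨q n + n, rfl⟩)

lemma isOpen_cylinder (X : Subshift) (n : ℕ) : IsOpen (cylinder X n) :=
  TopologicalSpace.isOpen_generateFrom_of_mem ⟨X, n, rfl⟩

lemma lang_eq_of_cylinder {X Y : Subshift} {n N : ℕ} (h : Y ∈ cylinder X N) (hn : n ≤ N) :
    Y.lang n = X.lang n := by
  have hN : Y.lang N = X.lang N := h
  rw [Y.lang_take hn, X.lang_take hn, hN]

lemma isOpen_complexity_gt (B : ℕ) : IsOpen {X : Subshift | ∃ m : ℕ, B < (X.lang m).ncard} := by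
  rw [isOpen_iff_forall_mem_open]
  rintro X ⟨m, hm⟩
  refine ⟨cylinder X m, ?_, isOpen_cylinder X m, rfl⟩
  intro Y hY
  have h1 : Y.lang m = X.lang m := hY
  exact ⟨m, by rw [h1]; exact hm⟩

lemma isOpen_covering (n : ℕ) :
    IsOpen {X : Subshift | ∃ m : ℕ, ∃ v ∈ X.lang m, ∀ u ∈ X.lang n, u <:+: v} := by
  rw [isOpen_iff_forall_mem_open]
  rintro X ⟨m, v, hv, hcov⟩
  refine ⟨cylinder X (max m n), ?_, isOpen_cylinder X (max m n), rfl⟩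
  intro Y hY
  have h1 : Y.lang m = X.lang m := lang_eq_of_cylinder hY (le_max_left _ _)
  have h2 : Y.lang n = X.lang n := lang_eq_of_cylinder hY (le_max_right _ _)
  exact ⟨m, v, h1 ▸ hv, fun u hu => hcov u (h2 ▸ hu)⟩

lemma isGδ_tprime : IsGδ Tprime := by
  have he : Tprime =
      (⋂ n : ℕ, {X : Subshift | ∃ m : ℕ, ∃ v ∈ X.lang m, ∀ u ∈ X.lang n, u <:+: v}) ∩
      (⋂ B : ℕ, {X : Subshift | ∃ m : ℕ, B < (X.lang m).ncard}) := by
    ext X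
    simp only [Tprime, Set.mem_inter_iff, Set.mem_iInter, Set.mem_setOf_eq]
    rw [X.isTransitive_iff, X.infinite_iff]
  rw [he]
  exact IsGδ.inter (IsGδ.iInter fun n => (isOpen_covering n).isGδ)
    (IsGδ.iInter fun B => (isOpen_complexity_gt B).isGδ)

end Aux

/-- `𝒯'`, the set of infinite transitive subshifts, is a dense Gδ subset of its closure. -/
theorem tprime_dense_Gδ_in_closure :
    IsGδ {X : ↥(closure Tprime) | X.1 ∈ Tprime} ∧
    Dense {X : ↥(closure Tprime) | X.1 ∈ Tprime} := by
  constructor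
  · have hset : {X : ↥(closure Tprime) | X.1 ∈ Tprime} =
        (Subtype.val : ↥(closure Tprime) → Subshift) ⁻¹' Tprime := rfl
    rw [hset]
    obtain ⟨T, hTopen, hTc, hTeq⟩ := isGδ_tprime
    refine ⟨(fun t => (Subtype.val : ↥(closure Tprime) → Subshift) ⁻¹' t) '' T, ?_, hTc.image _, ?_⟩
    · rintro t ⟨u, hu, rfl⟩
      exact (hTopen u hu).preimage continuous_subtype_val
    · rw [hTeq, Set.sInter_image, Set.preimage_sInter]
  · intro x
    rw [closure_subtype]
    have himg : Subtype.val '' {X : ↥(closure Tprime) | X.1 ∈ Tprime} = Tprime := by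
      ext z
      constructor
      · rintro ⟨⟨z', hz'⟩, hmem, rfl⟩; exact hmem
      · intro hz; exact ⟨⟨z, subset_closure hz⟩, hz, rfl⟩
    rw [himg]
    exact x.2

end Generic
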